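/- arXiv:1307.2163 — 2 statements merged into one kernel-verified Lean document; each statement's English description precedes it below -/
import Mathlib

section
/- Let p be a path in DL_d(q) traversing edges e_1, ..., e_n such that for some t < s, edge e_t descends in tree T_i along an edge labeled β (ascending in some T_j), edge e_s ascends in T_i along the same edge labeled β (descending in some T_k), and no edge strictly between e_t and e_s involves tree T_i. Then p is not a geodesic: there is a strictly shorter path with the same endpoints. -/
/-- A vertex of the (q+1)-regular tree with a distinguished end, in the
horocyclic model: a height `k ∈ ℤ` together with a finitely supported
labelling of the levels strictly below `k`. -/
structure TreeVert (q : ℕ) where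
  height : ℤ
  labels : ℤ → ℕ
  labels_lt : ∀ n, labels n = 0 ∨ labels n < q
  supp_below : ∀ n, height ≤ n → labels n = 0
  fin_supp : (Function.support labels).Finite

namespace DL

variable {q d : ℕ}

/-- `v` is a child of `u` (one step further from the distinguished end). -/
abbrev treeAdjUp (u v : TreeVert q) : Prop :=
  v.height = u.height + 1 ∧ ∀ n, n ≠ u.height → v.labels n = u.labels n

/-- The (q+1)-regular tree. -/
def TreeGraph (q : ℕ) : SimpleGraph (TreeVert q) where
  Adj u v := treeAdjUp u v ∨ treeAdjUp v u
  symm := ⟨fun u v h => Or.symm h⟩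
  loopless := by
    constructor
    intro u h
    rcases h with ⟨h1, _⟩ | ⟨h1, _⟩ <;> omega

/-- The base vertex of the tree. -/
def treeOrigin (q : ℕ) : TreeVert q :=
  ⟨0, fun _ => 0, fun _ => Or.inl rfl, fun _ _ => rfl, by simp⟩

/-- Vertices of the Diestel–Leader graph `DL_d(q)`:
`d`-tuples of tree vertices whose heights sum to zero. -/
def DLVert (d q : ℕ) : Type :=
  {x : Fin d → TreeVert q // (∑ i, (x i).height) = 0}

/-- The Diestel–Leader graph `DL_d(q)`: an edge ascends in one tree and
descends in another, all other coordinates being fixed. -/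
def DLGraph (d q : ℕ) : SimpleGraph (DLVert d q) where
  Adj v w := ∃ i j : Fin d, i ≠ j ∧ treeAdjUp (v.1 i) (w.1 i) ∧ treeAdjUp (w.1 j) (v.1 j) ∧
      ∀ k : Fin d, k ≠ i → k ≠ j → v.1 k = w.1 k
  symm := by
    constructor
    rintro v w ⟨i, j, hij, h1, h2, h3⟩
    exact ⟨j, i, hij.symm, h2, h1, fun k hk1 hk2 => (h3 k hk2 hk1).symm⟩
  loopless := by
    constructor
    rintro v ⟨i, j, hij, ⟨h1, _⟩, _⟩
    omega

/-- The base point of `DL_d(q)`. -/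
def origin (d q : ℕ) : DLVert d q :=
  ⟨fun _ => treeOrigin q, by simp [treeOrigin]⟩

/-- A geodesic ray in `DL_d(q)` : an isometric embedding of `ℕ`. -/
def IsGeodesicRay (γ : ℕ → DLVert d q) : Prop :=
  ∀ m n : ℕ, m ≤ n → (DLGraph d q).dist (γ m) (γ n) = n - m

/-- Two rays are asymptotic when they stay at uniformly bounded distance. -/
def Asymptotic (γ γ' : ℕ → DLVert d q) : Prop :=
  ∃ C : ℕ, ∀ n : ℕ, (DLGraph d q).dist (γ n) (γ' n) ≤ C

instance : TopologicalSpace (DLVert d q) := ⊥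

/-- Geodesic rays emanating from the origin, with the topology of uniform
convergence on compact sets (= pointwise convergence, the vertex set being
discrete). -/
def RaySpace (d q : ℕ) : Type :=
  {γ : ℕ → DLVert d q // IsGeodesicRay γ ∧ γ 0 = origin d q}

instance : TopologicalSpace (RaySpace d q) := by
  unfold RaySpace; infer_instance

lemma reachable_origin (γ : RaySpace d q) (n : ℕ) :
    (DLGraph d q).Reachable (origin d q) (γ.1 n) := by
  cases n with
  | zero => rw [γ.2.2]
  | succ n =>
    have h := γ.2.1 0 (n + 1) (Nat.zero_le _)
    have hne : (DLGraph d q).dist (γ.1 0) (γ.1 (n + 1)) ≠ 0 := by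
      rw [h]; omega
    have := SimpleGraph.Reachable.of_dist_ne_zero hne
    rwa [γ.2.2] at this

/-- Asymptoticity as an equivalence relation on geodesic rays from the origin. -/
def asympSetoid (d q : ℕ) : Setoid (RaySpace d q) where
  r γ γ' := Asymptotic γ.1 γ'.1
  iseqv := by
    constructor
    · intro γ
      exact ⟨0, fun n => by simp [SimpleGraph.dist_self]⟩
    · rintro γ γ' ⟨C, hC⟩
      exact ⟨C, fun n => by rw [SimpleGraph.dist_comm]; exact hC n⟩
    · rintro a b c ⟨C1, h1⟩ ⟨C2, h2⟩
      refine ⟨C1 + C2, fun n => ?_⟩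
      have hab : (DLGraph d q).Reachable (a.1 n) (b.1 n) :=
        (reachable_origin a n).symm.trans (reachable_origin b n)
      have hbc : (DLGraph d q).Reachable (b.1 n) (c.1 n) :=
        (reachable_origin b n).symm.trans (reachable_origin c n)
      obtain ⟨p, hp⟩ := hab.exists_walk_length_eq_dist
      obtain ⟨p', hp'⟩ := hbc.exists_walk_length_eq_dist
      calc (DLGraph d q).dist (a.1 n) (c.1 n) ≤ (p.append p').length :=
            SimpleGraph.dist_le _
        _ = (DLGraph d q).dist (a.1 n) (b.1 n) + (DLGraph d q).dist (b.1 n) (c.1 n) := by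
            rw [SimpleGraph.Walk.length_append, hp, hp']
        _ ≤ C1 + C2 := Nat.add_le_add (h1 n) (h2 n)

/-- The visual boundary of `DL_d(q)`: asymptotic classes of geodesic rays
from the origin, with the quotient topology. -/
def Boundary (d q : ℕ) : Type := Quotient (asympSetoid d q)

instance : TopologicalSpace (Boundary d q) := by
  unfold Boundary; infer_instance

/-- A ray in `DL_2(q)` descends for exactly `n` steps in tree `i`
(bottoming out at height `-n`), then ascends forever in tree `i`.
For `n = 0` this says the ray ascends forever in tree `i` with no turn. -/
def DescendsExactly (i : Fin 2) (n : ℕ) (γ : ℕ → DLVert 2 q) : Prop :=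
  (∀ t : ℕ, t ≤ n → ((γ t).1 i).height = -(t : ℤ)) ∧
  (∀ t : ℕ, n ≤ t → ((γ t).1 i).height = (t : ℤ) - 2 * n)

/-- The subset `C_n^i` of the boundary: classes of rays bottoming out in
tree `i` after descending exactly `n` edges. -/
def Cset (q : ℕ) (i : Fin 2) (n : ℕ) : Set (Boundary 2 q) :=
  {x | ∃ γ : RaySpace 2 q, Quotient.mk (asympSetoid 2 q) γ = x ∧ DescendsExactly i n γ.1}

/-- Projection of a path in `DL_d(q)` to the `i`-th tree. -/
def proj (i : Fin d) (γ : ℕ → DLVert d q) : ℕ → TreeVert q := fun n => (γ n).1 i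

/-- Two (lazy) paths in the tree converge to the same end: both eventually
leave every ball, and they come within a uniformly bounded distance of each
other at arbitrarily late times. -/
def SameEnd (a b : ℕ → TreeVert q) : Prop :=
  (∀ R : ℕ, ∃ N : ℕ, ∀ n, N ≤ n → R ≤ (TreeGraph q).dist (a 0) (a n)) ∧
  (∀ R : ℕ, ∃ N : ℕ, ∀ n, N ≤ n → R ≤ (TreeGraph q).dist (b 0) (b n)) ∧
  (∃ C : ℕ, ∀ N : ℕ, ∃ m n, N ≤ m ∧ N ≤ n ∧ (TreeGraph q).dist (a m) (b n) ≤ C)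

/-- The step from `p m` to `p (m+1)` descends in tree `i`. -/
def StepDown (i : Fin d) (p : ℕ → DLVert d q) (m : ℕ) : Prop :=
  treeAdjUp ((p (m + 1)).1 i) ((p m).1 i)

/-- The step from `p m` to `p (m+1)` ascends in tree `i`. -/
def StepUp (i : Fin d) (p : ℕ → DLVert d q) (m : ℕ) : Prop :=
  treeAdjUp ((p m).1 i) ((p (m + 1)).1 i)

/-- A turn in tree `i`: a subpath beginning with a descent in `T_i` at step `t`,
ending with an ascent in `T_i` at step `s`, with no intervening step
involving `T_i`. -/
def IsTurn (i : Fin d) (p : ℕ → DLVert d q) (t s : ℕ) : Prop :=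
  t < s ∧ StepDown i p t ∧ StepUp i p s ∧
    ∀ m, t < m → m < s → (p (m + 1)).1 i = (p m).1 i


section Aux

open SimpleGraph

lemma tv_ext {u v : TreeVert q} (h1 : u.height = v.height) (h2 : u.labels = v.labels) :
    u = v := by
  cases u; cases v; simp_all

/-- parent uniqueness in the tree -/
lemma treeAdjUp_unique {u u' v : TreeVert q} (h : treeAdjUp u v) (h' : treeAdjUp u' v) :
    u = u' := by
  obtain ⟨h1, h2⟩ := h
  obtain ⟨h1', h2'⟩ := h'
  have hh : u.height = u'.height := by omega
  refine tv_ext hh (funext fun n => ?_)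
  by_cases hn : n = u.height
  · subst hn
    rw [u.supp_below _ le_rfl, u'.supp_below _ (by omega)]
  · rw [← h2 n hn, h2' n (by omega)]

lemma adj_iff {v w : DLVert d q} :
    (DLGraph d q).Adj v w ↔ ∃ a b : Fin d, a ≠ b ∧ treeAdjUp (v.1 a) (w.1 a) ∧
      treeAdjUp (w.1 b) (v.1 b) ∧ ∀ k : Fin d, k ≠ a → k ≠ b → v.1 k = w.1 k :=
  Iff.rfl

/-- extract the data of an edge known to descend in tree `i`. -/
lemma down_data {v w : DLVert d q} (h : (DLGraph d q).Adj v w) {i : Fin d}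
    (hd : treeAdjUp (w.1 i) (v.1 i)) :
    ∃ a, a ≠ i ∧ treeAdjUp (v.1 a) (w.1 a) ∧
      ∀ k, k ≠ a → k ≠ i → v.1 k = w.1 k := by
  obtain ⟨a, e, hae, h1, h2, h3⟩ := adj_iff.1 h
  have hei : e = i := by
    by_contra he
    by_cases ha : a = i
    · subst ha
      have := h1.1
      have := hd.1
      omega
    · have hvw := h3 i (fun hh => ha hh.symm) (fun hh => he hh.symm)
      have := hd.1
      rw [hvw] at this
      omega
  subst hei
  exact ⟨a, hae, h1, h3⟩

/-- extract the data of an edge not involving tree `i`. -/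
lemma mid_data {v w : DLVert d q} (h : (DLGraph d q).Adj v w) {i : Fin d}
    (heq : (w.1 i) = (v.1 i)) :
    ∃ c e, c ≠ e ∧ c ≠ i ∧ e ≠ i ∧ treeAdjUp (v.1 c) (w.1 c) ∧
      treeAdjUp (w.1 e) (v.1 e) ∧ ∀ k, k ≠ c → k ≠ e → v.1 k = w.1 k := by
  obtain ⟨c, e, hce, h1, h2, h3⟩ := adj_iff.1 h
  have hci : c ≠ i := by
    rintro rfl
    have := h1.1
    rw [heq] at this
    omega
  have hei : e ≠ i := by
    rintro rfl
    have := h2.1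
    rw [heq] at this
    omega
  exact ⟨c, e, hce, hci, hei, h1, h2, h3⟩

lemma sum_upd (g : Fin d → TreeVert q) (j : Fin d) (u : TreeVert q) :
    ∑ x, ((Function.update g j u) x).height
      = (∑ x, (g x).height) - (g j).height + u.height := by
  classical
  have h : ∀ x, ((Function.update g j u) x).height
      = Function.update (fun y => (g y).height) j u.height x :=
    fun x => Function.apply_update (fun _ t => t.height) g j u x
  rw [Finset.sum_congr rfl (fun x _ => h x),
    Finset.sum_update_of_mem (Finset.mem_univ j),
    Finset.sum_eq_sum_sdiff_singleton_add (Finset.mem_univ j) (fun y => (g y).height)]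
  ring

lemma sum_upd2 {g : Fin d → TreeVert q} (hg : ∑ x, (g x).height = 0) {j k : Fin d}
    (hjk : j ≠ k) {u w : TreeVert q} (hu : u.height = (g j).height + 1)
    (hw : w.height = (g k).height - 1) :
    ∑ x, ((Function.update (Function.update g j u) k w) x).height = 0 := by
  rw [sum_upd, sum_upd, Function.update_of_ne (Ne.symm hjk)]
  omega

lemma walk_of_fun {V : Type*} {G : SimpleGraph V} (p : ℕ → V) (a : ℕ) :
    ∀ n : ℕ, (∀ m, a ≤ m → m < a + n → G.Adj (p m) (p (m + 1))) →
      ∃ w : G.Walk (p a) (p (a + n)), w.length = n := by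
  intro n
  induction n with
  | zero => exact fun _ => ⟨Walk.nil, rfl⟩
  | succ n ih =>
    intro h
    obtain ⟨w, hw⟩ := ih (fun m hm hm2 => h m hm (by omega))
    exact ⟨w.concat (h (a + n) (by omega) (by omega)), by
      rw [Walk.length_concat, hw]⟩

/-- Key lemma: a subpath descending in `T_i`, not touching `T_i` in the middle,
and then ascending back to the same vertex of `T_i`, can be shortened. -/
lemma key {d q : ℕ} {i : Fin d} : ∀ (k : ℕ) (p : ℕ → DLVert d q) (t : ℕ),
    (∀ m, t ≤ m → m ≤ t + 1 + k → (DLGraph d q).Adj (p m) (p (m + 1))) →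
    StepDown i p t →
    (∀ m, t < m → m < t + 1 + k → (p (m + 1)).1 i = (p m).1 i) →
    (p (t + 1 + k + 1)).1 i = (p t).1 i →
    ∃ w : (DLGraph d q).Walk (p t) (p (t + 1 + k + 1)), w.length ≤ k + 1 := by
  intro k
  induction k with
  | zero =>
    intro p t hpath hdown hmid hback
    have h0 : (DLGraph d q).Adj (p t) (p (t + 1)) := hpath t le_rfl (by omega)
    have h1 : (DLGraph d q).Adj (p (t + 1)) (p (t + 2)) := hpath (t + 1) (by omega) (by omega)
    have hdn : treeAdjUp ((p (t + 1)).1 i) ((p t).1 i) := hdown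
    obtain ⟨a, hai, hupa, hfix0⟩ := down_data h0 hdn
    have hupi : treeAdjUp ((p (t + 1)).1 i) ((p (t + 2)).1 i) := by
      have : (p (t + 1 + 0 + 1)).1 i = (p t).1 i := hback
      simpa [this] using hdn
    obtain ⟨b, hbi, hdnb, hfix1⟩ := down_data h1.symm hupi
    by_cases hab : a = b
    · subst hab
      have heq : p (t + 2) = p t := by
        refine Subtype.ext (funext fun k => ?_)
        by_cases hk : k = i
        · subst hk; exact hback
        · by_cases hka : k = a
          · subst hka
            exact (treeAdjUp_unique hupa hdnb).symm
          · exact ((hfix0 k hka hk).trans (hfix1 k hka hk).symm).symm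
      exact ⟨Walk.nil.copy rfl heq.symm, by simp⟩
    · have hadj : (DLGraph d q).Adj (p t) (p (t + 2)) := by
        refine adj_iff.2 ⟨a, b, hab, ?_, ?_, ?_⟩
        · rw [hfix1 a hab hai]; exact hupa
        · rw [← hfix0 b (fun h => hab h.symm) hbi] at hdnb; exact hdnb
        · intro k hka hkb
          by_cases hk : k = i
          · subst hk; exact hback.symm
          · exact (hfix0 k hka hk).trans (hfix1 k hkb hk).symm
      exact ⟨Walk.cons hadj Walk.nil, by simp⟩
  | succ k IH =>
    intro p t hpath hdown hmid hback
    have h0 : (DLGraph d q).Adj (p t) (p (t + 1)) := hpath t le_rfl (by omega)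
    have h1 : (DLGraph d q).Adj (p (t + 1)) (p (t + 2)) := hpath (t + 1) (by omega) (by omega)
    have hdn : treeAdjUp ((p (t + 1)).1 i) ((p t).1 i) := hdown
    obtain ⟨a, hai, hupa, hfix0⟩ := down_data h0 hdn
    have hmideq : (p (t + 2)).1 i = (p (t + 1)).1 i := hmid (t + 1) (by omega) (by omega)
    obtain ⟨c, e, hce, hci, hei, hupc, hdne, hfix1⟩ := mid_data h1 hmideq
    -- common recursion mechanics, given the two swapped edges
    have common : ∀ z : DLVert d q, (DLGraph d q).Adj (p t) z →
        (DLGraph d q).Adj z (p (t + 2)) → z.1 i = (p t).1 i →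
        ∃ w : (DLGraph d q).Walk (p t) (p (t + 1 + (k + 1) + 1)), w.length ≤ k + 1 + 1 := by
      intro z hadj1 hadj2 hzi
      set p' : ℕ → DLVert d q := Function.update p (t + 1) z with hp'
      have hp'at : p' (t + 1) = z := Function.update_self _ _ _
      have hp'ne : ∀ m, m ≠ t + 1 → p' m = p m := fun m hm => Function.update_of_ne hm _ _
      have hpath' : ∀ m, t + 1 ≤ m → m ≤ t + 1 + 1 + k → (DLGraph d q).Adj (p' m) (p' (m + 1)) := by
        intro m hm1 hm2
        rcases eq_or_lt_of_le hm1 with rfl | hlt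
        · rw [hp'at, hp'ne (t + 1 + 1) (by omega)]
          exact hadj2
        · rw [hp'ne m (by omega), hp'ne (m + 1) (by omega)]
          exact hpath m (by omega) (by omega)
      have hdown' : StepDown i p' (t + 1) := by
        show treeAdjUp ((p' (t + 1 + 1)).1 i) ((p' (t + 1)).1 i)
        rw [hp'at, hp'ne (t + 1 + 1) (by omega), hzi]
        show treeAdjUp ((p (t + 2)).1 i) ((p t).1 i)
        rw [hmideq]
        exact hdn
      have hmid' : ∀ m, t + 1 < m → m < t + 1 + 1 + k → (p' (m + 1)).1 i = (p' m).1 i := by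
        intro m hm1 hm2
        rw [hp'ne m (by omega), hp'ne (m + 1) (by omega)]
        exact hmid m (by omega) (by omega)
      have hback' : (p' (t + 1 + 1 + k + 1)).1 i = (p' (t + 1)).1 i := by
        rw [hp'at, hp'ne _ (by omega), hzi,
          show t + 1 + 1 + k + 1 = t + 1 + (k + 1) + 1 from by omega]
        exact hback
      obtain ⟨w', hw'⟩ := IH p' (t + 1) hpath' hdown' hmid' hback'
      refine ⟨Walk.cons hadj1 (w'.copy hp'at
        (by rw [hp'ne _ (by omega), show t + 1 + 1 + k + 1 = t + 1 + (k + 1) + 1 from by omega])), ?_⟩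
      rw [Walk.length_cons, Walk.length_copy]
      omega
    by_cases hea : e = a
    · -- the middle edge undoes the ascent of the first edge: merge into one edge
      subst hea
      have hadj : (DLGraph d q).Adj (p t) (p (t + 2)) := by
        refine adj_iff.2 ⟨c, i, hci, ?_, ?_, ?_⟩
        · rw [hfix0 c hce hci]
          exact hupc
        · rw [hmideq]; exact hdn
        · intro k hkc hki
          by_cases hka : k = e
          · subst hka
            exact treeAdjUp_unique hupa hdne
          · exact (hfix0 k hka hki).trans (hfix1 k hkc hka)
      obtain ⟨w', hw'⟩ := walk_of_fun p (t + 2) (k + 1)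
        (fun m hm1 hm2 => hpath m (by omega) (by omega))
      refine ⟨Walk.cons hadj (w'.copy rfl
        (by rw [show t + 2 + (k + 1) = t + 1 + (k + 1) + 1 from by omega])), ?_⟩
      rw [Walk.length_cons, Walk.length_copy]
      omega
    · by_cases hca : c = a
      · -- case: the middle edge continues the ascent in tree `a`
        subst hca
        obtain ⟨z, hzval⟩ : ∃ z : DLVert d q,
            z.1 = Function.update (Function.update (p (t + 2)).1 i ((p t).1 i)) c
              ((p (t + 1)).1 c) := by
          refine ⟨⟨_, ?_⟩, rfl⟩
          refine sum_upd2 (p (t + 2)).2 (Ne.symm hci) ?_ ?_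
          · rw [hmideq]; exact hdn.1
          · have := hupc.1; omega
        have hz_c : z.1 c = (p (t + 1)).1 c := by
          rw [hzval, Function.update_self]
        have hz_i : z.1 i = (p t).1 i := by
          rw [hzval, Function.update_of_ne (Ne.symm hci), Function.update_self]
        have hz_other : ∀ k, k ≠ c → k ≠ i → z.1 k = (p (t + 2)).1 k := by
          intro k hkc hki
          rw [hzval, Function.update_of_ne hkc, Function.update_of_ne hki]
        refine common z ?_ ?_ hz_i
        · refine adj_iff.2 ⟨c, e, hce, ?_, ?_, ?_⟩
          · rw [hz_c]; exact hupa
          · rw [hz_other e (Ne.symm hce) hei, hfix0 e hea hei]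
            exact hdne
          · intro k hkc hke
            by_cases hki : k = i
            · subst hki; exact hz_i.symm
            · rw [hz_other k hkc hki]
              exact (hfix0 k hkc hki).trans (hfix1 k hkc hke)
        · refine adj_iff.2 ⟨c, i, hci, ?_, ?_, ?_⟩
          · rw [hz_c]; exact hupc
          · rw [hz_i, hmideq]; exact hdn
          · intro k hkc hki
            exact hz_other k hkc hki
      · -- case: the middle edge is disjoint from the first edge: plain commutation
        obtain ⟨z, hzval⟩ : ∃ z : DLVert d q,
            z.1 = Function.update (Function.update (p t).1 c ((p (t + 2)).1 c)) e
              ((p (t + 2)).1 e) := by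
          refine ⟨⟨_, ?_⟩, rfl⟩
          refine sum_upd2 (p t).2 hce ?_ ?_
          · rw [hfix0 c hca hci]; exact hupc.1
          · rw [hfix0 e hea hei]
            have := hdne.1; omega
        have hz_c : z.1 c = (p (t + 2)).1 c := by
          rw [hzval, Function.update_of_ne hce, Function.update_self]
        have hz_e : z.1 e = (p (t + 2)).1 e := by
          rw [hzval, Function.update_self]
        have hz_other : ∀ k, k ≠ c → k ≠ e → z.1 k = (p t).1 k := by
          intro k hkc hke
          rw [hzval, Function.update_of_ne hke, Function.update_of_ne hkc]
        have hz_i : z.1 i = (p t).1 i := hz_other i (Ne.symm hci) (Ne.symm hei)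
        refine common z ?_ ?_ hz_i
        · refine adj_iff.2 ⟨c, e, hce, ?_, ?_, ?_⟩
          · rw [hz_c, hfix0 c hca hci]
            exact hupc
          · rw [hz_e, hfix0 e hea hei]
            exact hdne
          · intro k hkc hke
            exact (hz_other k hkc hke).symm
        · refine adj_iff.2 ⟨a, i, hai, ?_, ?_, ?_⟩
          · rw [hz_other a (fun h => hca h.symm) (fun h => hea h.symm),
              ← hfix1 a (fun h => hca h.symm) (fun h => hea h.symm)]
            exact hupa
          · rw [hz_i, hmideq]; exact hdn
          · intro k hka hki
            by_cases hke : k = e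
            · subst hke; exact hz_e
            · by_cases hkc : k = c
              · subst hkc; exact hz_c
              · rw [hz_other k hkc hke]
                exact (hfix0 k hka hki).trans (hfix1 k hkc hke)
end Aux

/-- a path in `DL_d(q)` which descends along a tree edge in `T_i`
at step `t` and later ascends along that same edge at step `s`, with no
intervening step involving `T_i`, is not geodesic: its endpoints are at
distance strictly less than its length. -/
theorem not_geodesic_of_backtrack {d q : ℕ} (hq : 2 ≤ q) (hd : 2 ≤ d)
    (p : ℕ → DLVert d q) (n : ℕ)
    (hpath : ∀ m : ℕ, m < n → (DLGraph d q).Adj (p m) (p (m + 1)))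
    (i : Fin d) (t s : ℕ) (hts : t < s) (hsn : s < n)
    (hdown : StepDown i p t)
    (hmid : ∀ m, t < m → m < s → (p (m + 1)).1 i = (p m).1 i)
    (hback : (p (s + 1)).1 i = (p t).1 i) :
    (DLGraph d q).dist (p 0) (p n) < n := by
  obtain ⟨k, rfl⟩ : ∃ k, s = t + 1 + k := ⟨s - t - 1, by omega⟩
  obtain ⟨r, rfl⟩ : ∃ r, n = t + 1 + k + 1 + r := ⟨n - (t + 1 + k) - 1, by omega⟩
  obtain ⟨w2, hw2⟩ := key k p t (fun m hm1 hm2 => hpath m (by omega)) hdown hmid hback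
  obtain ⟨w1, hw1⟩ := walk_of_fun p 0 t (fun m hm1 hm2 => hpath m (by omega))
  obtain ⟨w3, hw3⟩ := walk_of_fun p (t + 1 + k + 1) r (fun m hm1 hm2 => hpath m (by omega))
  have hle := SimpleGraph.dist_le ((w1.copy rfl (by rw [Nat.zero_add])).append (w2.append w3))
  rw [SimpleGraph.Walk.length_append, SimpleGraph.Walk.length_append,
    SimpleGraph.Walk.length_copy, hw1, hw3] at hle
  omega

end DL
end

section
/- A geodesic path in DL_d(q) has at most one turn in each tree T_i: if a path has two or more turns in some tree, it is not a geodesic. -/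
namespace DL

variable {q d : ℕ}

/-! ### Auxiliary machinery for STATEMENT 15 -/

lemma TreeVert.ext' {x y : TreeVert q} (h1 : x.height = y.height)
    (h2 : x.labels = y.labels) : x = y := by
  cases x; cases y; dsimp at h1 h2; subst h1; subst h2; rfl

lemma treeAdjUp_height {u v : TreeVert q} (h : treeAdjUp u v) :
    v.height = u.height + 1 := h.1

lemma parent_unique {x x' y : TreeVert q} (h : treeAdjUp x y) (h' : treeAdjUp x' y) :
    x = x' := by
  have hh : x.height = x'.height := by have := h.1; have := h'.1; omega
  refine TreeVert.ext' hh (funext fun n => ?_)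
  by_cases hn : n = x.height
  · subst hn
    rw [x.supp_below _ le_rfl, x'.supp_below _ (by omega)]
  · rw [← h.2 n hn]; exact h'.2 n (by omega)

lemma not_treeAdjUp_both {u v : TreeVert q} (h : treeAdjUp u v) (h' : treeAdjUp v u) :
    False := by
  have := h.1; have := h'.1; omega

lemma DLVert.ext' {x y : DLVert d q} (h : ∀ k, x.1 k = y.1 k) : x = y :=
  Subtype.ext (funext h)

lemma adj_mk {v w : DLVert d q} (a b : Fin d) (hab : a ≠ b)
    (h1 : treeAdjUp (v.1 a) (w.1 a)) (h2 : treeAdjUp (w.1 b) (v.1 b))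
    (h3 : ∀ k, k ≠ a → k ≠ b → v.1 k = w.1 k) : (DLGraph d q).Adj v w :=
  ⟨a, b, hab, h1, h2, h3⟩

/-- Classify a DL edge relative to the tree `i`. -/
lemma adj_classify {v w : DLVert d q} (i : Fin d) (h : (DLGraph d q).Adj v w) :
    (∃ b, b ≠ i ∧ treeAdjUp (v.1 i) (w.1 i) ∧ treeAdjUp (w.1 b) (v.1 b) ∧
      ∀ k, k ≠ i → k ≠ b → v.1 k = w.1 k) ∨
    (∃ a, a ≠ i ∧ treeAdjUp (v.1 a) (w.1 a) ∧ treeAdjUp (w.1 i) (v.1 i) ∧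
      ∀ k, k ≠ a → k ≠ i → v.1 k = w.1 k) ∨
    (v.1 i = w.1 i ∧ ∃ a b, a ≠ b ∧ a ≠ i ∧ b ≠ i ∧
      treeAdjUp (v.1 a) (w.1 a) ∧ treeAdjUp (w.1 b) (v.1 b) ∧
      ∀ k, k ≠ a → k ≠ b → v.1 k = w.1 k) := by
  obtain ⟨a, b, hab, h1, h2, h3⟩ := h
  by_cases hai : a = i
  · subst hai
    exact Or.inl ⟨b, fun hb => hab hb.symm, h1, h2, h3⟩
  · by_cases hbi : b = i
    · subst hbi
      exact Or.inr (Or.inl ⟨a, hai, h1, h2, h3⟩)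
    · exact Or.inr (Or.inr ⟨h3 i (fun hi => hai hi.symm) (fun hi => hbi hi.symm),
        a, b, hab, hai, hbi, h1, h2, h3⟩)

/-- Update one coordinate by a vertex of equal height. -/
def updI (P : DLVert d q) (i : Fin d) (x : TreeVert q)
    (hx : x.height = (P.1 i).height) : DLVert d q :=
  ⟨Function.update P.1 i x, by
    have hpt : ∀ k, ((Function.update P.1 i x) k).height = (P.1 k).height := by
      intro k
      rcases eq_or_ne k i with rfl | hk
      · rw [Function.update_self]; exact hx
      · rw [Function.update_of_ne hk]
    calc (∑ k, ((Function.update P.1 i x) k).height)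
        = ∑ k, (P.1 k).height := Finset.sum_congr rfl fun k _ => hpt k
      _ = 0 := P.2⟩

@[simp] lemma updI_same (P : DLVert d q) (i : Fin d) (x : TreeVert q) (hx) :
    (updI P i x hx).1 i = x := by
  show Function.update P.1 i x i = x
  rw [Function.update_self]

lemma updI_other (P : DLVert d q) (i : Fin d) (x : TreeVert q) (hx) {k : Fin d}
    (hk : k ≠ i) : (updI P i x hx).1 k = P.1 k := by
  show Function.update P.1 i x k = P.1 k
  rw [Function.update_of_ne hk]

/-- Update two coordinates, one going up and one going down. -/
def upd2 (P : DLVert d q) (a b : Fin d) (hab : a ≠ b) (xa xb : TreeVert q)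
    (ha : xa.height = (P.1 a).height + 1) (hb : xb.height = (P.1 b).height - 1) :
    DLVert d q :=
  ⟨Function.update (Function.update P.1 a xa) b xb, by
    have hpt : ∀ k, ((Function.update (Function.update P.1 a xa) b xb) k).height
        = (P.1 k).height + ((if k = a then (1 : ℤ) else 0) - (if k = b then (1 : ℤ) else 0)) := by
      intro k
      rcases eq_or_ne k b with rfl | hkb
      · rw [Function.update_self, if_neg hab.symm, if_pos rfl, hb]; ring
      · rw [Function.update_of_ne hkb, if_neg hkb]
        rcases eq_or_ne k a with rfl | hka
        · rw [Function.update_self, if_pos rfl, ha]; ring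
        · rw [Function.update_of_ne hka, if_neg hka]; ring
    rw [Finset.sum_congr rfl fun k _ => hpt k, Finset.sum_add_distrib,
      Finset.sum_sub_distrib, P.2, Finset.sum_ite_eq' Finset.univ a fun _ => (1 : ℤ),
      Finset.sum_ite_eq' Finset.univ b fun _ => (1 : ℤ)]
    simp⟩

lemma upd2_a (P : DLVert d q) (a b : Fin d) (hab : a ≠ b) (xa xb) (ha hb) :
    (upd2 P a b hab xa xb ha hb).1 a = xa := by
  show (Function.update (Function.update P.1 a xa) b xb) a = xa
  rw [Function.update_of_ne hab, Function.update_self]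

lemma upd2_b (P : DLVert d q) (a b : Fin d) (hab : a ≠ b) (xa xb) (ha hb) :
    (upd2 P a b hab xa xb ha hb).1 b = xb := by
  show (Function.update (Function.update P.1 a xa) b xb) b = xb
  rw [Function.update_self]

lemma upd2_other (P : DLVert d q) (a b : Fin d) (hab : a ≠ b) (xa xb) (ha hb)
    {k : Fin d} (hka : k ≠ a) (hkb : k ≠ b) :
    (upd2 P a b hab xa xb ha hb).1 k = P.1 k := by
  show (Function.update (Function.update P.1 a xa) b xb) k = P.1 k
  rw [Function.update_of_ne hkb, Function.update_of_ne hka]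

/-- A walk along a chain of adjacent vertices. -/
lemma chainWalk (p : ℕ → DLVert d q) :
    ∀ (k a : ℕ), (∀ m, a ≤ m → m < a + k → (DLGraph d q).Adj (p m) (p (m + 1))) →
      ∃ w : (DLGraph d q).Walk (p a) (p (a + k)), w.length = k := by
  intro k
  induction k with
  | zero => exact fun a _ => ⟨SimpleGraph.Walk.nil, rfl⟩
  | succ k ih =>
    intro a h
    obtain ⟨w, hw⟩ := ih (a + 1) (fun m h1 h2 => h m (by omega) (by omega))
    refine ⟨(SimpleGraph.Walk.cons (h a le_rfl (by omega)) w).copy rfl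
      (congrArg p (by omega)), ?_⟩
    rw [SimpleGraph.Walk.length_copy, SimpleGraph.Walk.length_cons, hw]
/-- `P` is adjacent to `v` by a move that goes up in some tree `T ≠ i` and down in `i`. -/
def PAdj (i : Fin d) (P v : DLVert d q) : Prop :=
  ∃ T, T ≠ i ∧ treeAdjUp (P.1 T) (v.1 T) ∧ treeAdjUp (v.1 i) (P.1 i) ∧
    ∀ k, k ≠ T → k ≠ i → P.1 k = v.1 k

/-- Key re-pairing lemma: a segment that starts one level down in tree `i`
(entered by an `i`-descent from `P`), stays there, and exits by an `i`-ascent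
back to the vertex `P.1 i`, can be traversed saving one step. -/
lemma lemmaB (i : Fin d) : ∀ (M : ℕ) (u : ℕ → DLVert d q) (P : DLVert d q),
    1 ≤ M →
    (∀ m, m < M → (DLGraph d q).Adj (u m) (u (m + 1))) →
    (∀ m, m + 1 < M → (u (m + 1)).1 i = (u m).1 i) →
    PAdj i P (u 0) →
    treeAdjUp ((u (M - 1)).1 i) ((u M).1 i) →
    P.1 i = (u M).1 i →
    ∃ w : (DLGraph d q).Walk P (u M), w.length ≤ M := by
  intro M
  induction M with
  | zero => intro u P h; omega
  | succ M ih =>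
    intro u P _ hwalk hflat hP hlast hPi
    obtain ⟨T, hTi, hPT, hPdown, hPoth⟩ := hP
    simp only [Nat.add_sub_cancel] at hlast
    rcases Nat.eq_zero_or_pos M with rfl | hM
    · -- base case: the segment has length 1, its only step ascends in `i`
      rcases adj_classify i (hwalk 0 (by omega)) with
        ⟨k', hk'i, hup, hdn, hoth⟩ | ⟨a, hai, hup, hdn, hoth⟩ | ⟨heq, -⟩
      · by_cases hTk' : T = k'
        · subst hTk'
          have hPu1 : P = u 1 := by
            refine DLVert.ext' fun k => ?_
            by_cases hki : k = i
            · subst hki; exact hPi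
            · by_cases hkT : k = T
              · subst hkT; exact parent_unique hPT hdn
              · rw [hPoth k hkT hki, hoth k hki hkT]
          exact ⟨(SimpleGraph.Walk.nil : (DLGraph d q).Walk P P).copy rfl hPu1, by simp⟩
        · refine ⟨SimpleGraph.Walk.cons (adj_mk T k' hTk' ?_ ?_ ?_) SimpleGraph.Walk.nil,
            by simp⟩
          · rw [← hoth T hTi hTk']; exact hPT
          · rw [hPoth k' (fun h => hTk' h.symm) hk'i]; exact hdn
          · intro k hkT hkk'
            by_cases hki : k = i
            · subst hki; exact hPi
            · rw [hPoth k hkT hki, hoth k hki hkk']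
      · exact (not_treeAdjUp_both hlast hdn).elim
      · have := hlast.1; rw [heq] at this; omega
    · -- inductive case: the segment's first step does not move tree `i`
      have flat0 : (u 1).1 i = (u 0).1 i := hflat 0 (by omega)
      have hstep0 := hwalk 0 (by omega)
      rcases adj_classify i hstep0 with
        ⟨k', hk'i, hup, -, -⟩ | ⟨a, hai, -, hdn, -⟩ | ⟨-, a₁, b₁, hab, hai, hbi, hup1, hdn1, hoth1⟩
      · have := hup.1; rw [flat0] at this; omega
      · have := hdn.1; rw [flat0] at this; omega
      · -- first step: up in a₁, down in b₁, both ≠ i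
        by_cases hbT : b₁ = T
        · -- cancellation: the down in b₁ undoes the pending up in T
          subst hbT
          have hanb : a₁ ≠ b₁ := hab
          have hPu1 : PAdj i P (u 1) := by
            refine ⟨a₁, hai, ?_, ?_, ?_⟩
            · rw [hPoth a₁ hab hai]; exact hup1
            · rw [flat0]; exact hPdown
            · intro k hka hki
              by_cases hkT : k = b₁
              · subst hkT; exact parent_unique hPT hdn1
              · rw [hPoth k hkT hki, hoth1 k hka hkT]
          obtain ⟨w, hw⟩ := ih (fun m => u (m + 1)) P hM
            (fun m hm => hwalk (m + 1) (by omega))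
            (fun m hm => hflat (m + 1) (by omega))
            hPu1
            (by show treeAdjUp ((u (M - 1 + 1)).1 i) ((u (M + 1)).1 i)
                rw [show M - 1 + 1 = M from by omega]; exact hlast)
            hPi
          exact ⟨w, by omega⟩
        · by_cases haT : a₁ = T
          · -- the first step ascends in T again: postpone the `i`-descent
            subst haT
            have hxb : ((u 1).1 b₁).height = (P.1 b₁).height - 1 := by
              have h' : ((u 0).1 b₁).height = ((u 1).1 b₁).height + 1 := hdn1.1
              rw [← hPoth b₁ (fun h => hbT h) hbi] at h'; omega
            set P' := upd2 P a₁ b₁ (fun h => hbT h.symm) ((u 0).1 a₁) ((u 1).1 b₁)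
              (by rw [hPT.1]) hxb with hP'
            have hadjPP' : (DLGraph d q).Adj P P' := by
              refine adj_mk a₁ b₁ (fun h => hbT h.symm) ?_ ?_ ?_
              · rw [upd2_a]; exact hPT
              · rw [upd2_b, hPoth b₁ (fun h => hbT h) hbi]; exact hdn1
              · intro k hka hkb; rw [upd2_other _ _ _ _ _ _ _ _ hka hkb]
            have hP'i : P'.1 i = P.1 i :=
              upd2_other _ _ _ _ _ _ _ _ (fun h => hTi h.symm) (fun h => hbi h.symm)
            have hPu1 : PAdj i P' (u 1) := by
              refine ⟨a₁, hTi, ?_, ?_, ?_⟩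
              · rw [upd2_a]; exact hup1
              · rw [hP'i, flat0]; exact hPdown
              · intro k hka hki
                by_cases hkb : k = b₁
                · subst hkb; rw [upd2_b]
                · rw [upd2_other _ _ _ _ _ _ _ _ hka hkb, hPoth k hka hki,
                    hoth1 k hka hkb]
            obtain ⟨w, hw⟩ := ih (fun m => u (m + 1)) P' hM
              (fun m hm => hwalk (m + 1) (by omega))
              (fun m hm => hflat (m + 1) (by omega))
              hPu1
              (by show treeAdjUp ((u (M - 1 + 1)).1 i) ((u (M + 1)).1 i)
                  rw [show M - 1 + 1 = M from by omega]; exact hlast)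
              (by rw [hP'i]; exact hPi)
            exact ⟨SimpleGraph.Walk.cons hadjPP' w, by simp; omega⟩
          · -- generic commutation: do the first step's moves from `P`
            have hxa : ((u 1).1 a₁).height = (P.1 a₁).height + 1 := by
              have h' : ((u 1).1 a₁).height = ((u 0).1 a₁).height + 1 := hup1.1
              rw [← hPoth a₁ haT hai] at h'; omega
            have hxb : ((u 1).1 b₁).height = (P.1 b₁).height - 1 := by
              have h' : ((u 0).1 b₁).height = ((u 1).1 b₁).height + 1 := hdn1.1
              rw [← hPoth b₁ hbT hbi] at h'; omega
            set P' := upd2 P a₁ b₁ hab ((u 1).1 a₁) ((u 1).1 b₁) hxa hxb with hP'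
            have hadjPP' : (DLGraph d q).Adj P P' := by
              refine adj_mk a₁ b₁ hab ?_ ?_ ?_
              · rw [upd2_a, hPoth a₁ haT hai]; exact hup1
              · rw [upd2_b, hPoth b₁ hbT hbi]; exact hdn1
              · intro k hka hkb; rw [upd2_other _ _ _ _ _ _ _ _ hka hkb]
            have hP'i : P'.1 i = P.1 i :=
              upd2_other _ _ _ _ _ _ _ _ (fun h => hai h.symm) (fun h => hbi h.symm)
            have hP'T : P'.1 T = P.1 T :=
              upd2_other _ _ _ _ _ _ _ _ (fun h => haT h.symm) (fun h => hbT h.symm)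
            have hPu1 : PAdj i P' (u 1) := by
              refine ⟨T, hTi, ?_, ?_, ?_⟩
              · rw [hP'T, ← hoth1 T (fun h => haT h.symm) (fun h => hbT h.symm)]
                exact hPT
              · rw [hP'i, flat0]; exact hPdown
              · intro k hkT hki
                by_cases hka : k = a₁
                · subst hka; rw [upd2_a]
                · by_cases hkb : k = b₁
                  · subst hkb; rw [upd2_b]
                  · rw [upd2_other _ _ _ _ _ _ _ _ hka hkb, hPoth k hkT hki,
                      hoth1 k hka hkb]
            obtain ⟨w, hw⟩ := ih (fun m => u (m + 1)) P' hM
              (fun m hm => hwalk (m + 1) (by omega))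
              (fun m hm => hflat (m + 1) (by omega))
              hPu1
              (by show treeAdjUp ((u (M - 1 + 1)).1 i) ((u (M + 1)).1 i)
                  rw [show M - 1 + 1 = M from by omega]; exact hlast)
              (by rw [hP'i]; exact hPi)
            exact ⟨SimpleGraph.Walk.cons hadjPP' w, by simp; omega⟩
/-- Splicing lemma: a path with an `i`-descent that is later undone by an
`i`-ascent along the same edge (with no `i`-moves in between) admits a
shortcut of length `n - 1`. -/
lemma lemmaC (p : ℕ → DLVert d q) (n : ℕ)
    (hpath : ∀ m, m < n → (DLGraph d q).Adj (p m) (p (m + 1)))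
    (i : Fin d) (u v : ℕ) (huv : u < v) (hvn : v < n)
    (hdown : treeAdjUp ((p (u + 1)).1 i) ((p u).1 i))
    (hup : treeAdjUp ((p v).1 i) ((p (v + 1)).1 i))
    (hflat : ∀ m, u < m → m < v → (p (m + 1)).1 i = (p m).1 i)
    (hret : (p u).1 i = (p (v + 1)).1 i) :
    (DLGraph d q).dist (p 0) (p n) ≤ n - 1 := by
  set M := v - u with hM
  have hM1 : 1 ≤ M := by omega
  -- the segment u (v+1) traversed with one step saved
  have hseg : ∃ w : (DLGraph d q).Walk (p u) (p (v + 1)), w.length ≤ M := by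
    have hPadj : PAdj i (p u) (p (u + 1)) := by
      rcases adj_classify i (hpath u (by omega)) with
        ⟨k', hk'i, hupp, -, -⟩ | ⟨a, hai, hup2, hdn2, hoth2⟩ | ⟨heq, -⟩
      · exact (not_treeAdjUp_both hupp hdown).elim
      · exact ⟨a, hai, hup2, hdn2, hoth2⟩
      · have := hdown.1; rw [heq] at this; omega
    have := lemmaB i M (fun m => p (u + 1 + m)) (p u) hM1
      (fun m hm => by
        have : u + 1 + m + 1 = u + 1 + (m + 1) := by omega
        rw [← this] at *
        exact (show (DLGraph d q).Adj (p (u + 1 + m)) (p (u + 1 + m + 1)) from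
          hpath (u + 1 + m) (by omega)))
      (fun m hm => by
        show (p (u + 1 + (m + 1))).1 i = (p (u + 1 + m)).1 i
        have e : u + 1 + (m + 1) = (u + 1 + m) + 1 := by omega
        rw [e]
        exact hflat (u + 1 + m) (by omega) (by omega))
      (by show PAdj i (p u) (p (u + 1 + 0)); exact hPadj)
      (by show treeAdjUp ((p (u + 1 + (M - 1))).1 i) ((p (u + 1 + M)).1 i)
          rw [show u + 1 + (M - 1) = v from by omega, show u + 1 + M = v + 1 from by omega]
          exact hup)
      (by show (p u).1 i = (p (u + 1 + M)).1 i
          rw [show u + 1 + M = v + 1 from by omega]; exact hret)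
    obtain ⟨w, hw⟩ := this
    exact ⟨w.copy rfl (congrArg p (by omega)), by
      rw [SimpleGraph.Walk.length_copy]; exact hw⟩
  obtain ⟨w2, hw2⟩ := hseg
  obtain ⟨w1, hw1⟩ := chainWalk p u 0 (fun m h1 h2 => hpath m (by omega))
  obtain ⟨w3, hw3⟩ := chainWalk p (n - (v + 1)) (v + 1) (fun m h1 h2 => hpath m (by omega))
  have hd := SimpleGraph.dist_le
    (((w1.copy rfl (congrArg p (by omega : 0 + u = u))).append w2).append
      (w3.copy rfl (congrArg p (by omega : v + 1 + (n - (v + 1)) = n))))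
  rw [SimpleGraph.Walk.length_append, SimpleGraph.Walk.length_append,
    SimpleGraph.Walk.length_copy, SimpleGraph.Walk.length_copy, hw1, hw3] at hd
  omega
/-- Swap the label values `l` and `l'`. -/
def swapFun (l l' v : ℕ) : ℕ := if v = l then l' else if v = l' then l else v

lemma swapFun_left (l l' : ℕ) : swapFun l l' l = l' := by
  unfold swapFun; rw [if_pos rfl]

lemma swapFun_right (l l' : ℕ) : swapFun l l' l' = l := by
  unfold swapFun
  split_ifs with h1 h2
  · exact h1
  · rfl
  · exact absurd rfl h2

/-- Swap the labels `l ↔ l'` at level `h`, for vertices strictly above level `h`. -/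
def swapAt (h : ℤ) (l l' : ℕ) (hl : l = 0 ∨ l < q) (hl' : l' = 0 ∨ l' < q)
    (x : TreeVert q) : TreeVert q :=
  if hx : h < x.height then
    { height := x.height
      labels := fun n => if n = h then swapFun l l' (x.labels h) else x.labels n
      labels_lt := by
        intro n
        by_cases hn : n = h
        · rw [if_pos hn]; unfold swapFun
          split_ifs
          · exact hl'
          · exact hl
          · exact x.labels_lt h
        · rw [if_neg hn]; exact x.labels_lt n
      supp_below := by
        intro n hn
        rw [if_neg (by omega : ¬ n = h)]
        exact x.supp_below n hn
      fin_supp := by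
        apply Set.Finite.subset (x.fin_supp.union (Set.finite_singleton h))
        intro n hn
        simp only [Function.mem_support] at hn
        by_cases hnh : n = h
        · exact Or.inr hnh
        · rw [if_neg hnh] at hn
          exact Or.inl hn }
  else x

lemma swapAt_height (h : ℤ) (l l' : ℕ) (hl hl') (x : TreeVert q) :
    (swapAt h l l' hl hl' x).height = x.height := by
  unfold swapAt; split <;> rfl

lemma swapAt_labels_hi (h : ℤ) (l l' : ℕ) (hl hl') (x : TreeVert q) (hx : h < x.height) :
    ∀ n, (swapAt h l l' hl hl' x).labels n
      = if n = h then swapFun l l' (x.labels h) else x.labels n := by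
  intro n; unfold swapAt; rw [dif_pos hx]

/-- `swapAt` preserves edges strictly above level `h`. -/
lemma swapAt_adjUp (h : ℤ) (l l' : ℕ) (hl hl') {x y : TreeVert q}
    (hxy : treeAdjUp x y) (hx : h < x.height) :
    treeAdjUp (swapAt h l l' hl hl' x) (swapAt h l l' hl hl' y) := by
  have hy : h < y.height := by have := hxy.1; omega
  constructor
  · rw [swapAt_height, swapAt_height]; exact hxy.1
  · intro n hn
    rw [swapAt_height] at hn
    rw [swapAt_labels_hi _ _ _ _ _ _ hx, swapAt_labels_hi _ _ _ _ _ _ hy]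
    by_cases hnh : n = h
    · rw [if_pos hnh, if_pos hnh, hxy.2 h (by omega)]
    · rw [if_neg hnh, if_neg hnh]; exact hxy.2 n hn

/-- `swapAt` preserves edges whose bottom endpoint sits exactly at level `h`. -/
lemma swapAt_adjUp_base (h : ℤ) (l l' : ℕ) (hl hl') {x y : TreeVert q}
    (hxy : treeAdjUp x y) (hx : x.height = h) :
    treeAdjUp x (swapAt h l l' hl hl' y) := by
  have hy : h < y.height := by have := hxy.1; omega
  constructor
  · rw [swapAt_height]; exact hxy.1
  · intro n hn
    rw [swapAt_labels_hi _ _ _ _ _ _ hy, if_neg (by omega : ¬ n = h)]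
    exact hxy.2 n hn

/-- `swapAt` exchanges two given children of a vertex at level `h`. -/
lemma swapAt_eq (h : ℤ) (l l' : ℕ) (hl hl') {e x y : TreeVert q}
    (hex : treeAdjUp e x) (hey : treeAdjUp e y) (he : e.height = h)
    (hs : swapFun l l' (x.labels h) = y.labels h) :
    swapAt h l l' hl hl' x = y := by
  have hx : h < x.height := by have := hex.1; omega
  refine TreeVert.ext' ?_ (funext fun n => ?_)
  · rw [swapAt_height, hex.1, hey.1]
  · rw [swapAt_labels_hi _ _ _ _ _ _ hx]
    by_cases hnh : n = h
    · rw [if_pos hnh, hnh, hs]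
    · rw [if_neg hnh, hex.2 n (by omega), ← hey.2 n (by omega)]

/-- Window surgery: relabel the `i`-th tree coordinate inside a window
`(lo, hi]` along which the path stays strictly above the level `h₀` at which
it entered (by an `i`-ascent) and exits (by an `i`-descent). -/
lemma surgery (p : ℕ → DLVert d q) (n : ℕ)
    (hpath : ∀ m, m < n → (DLGraph d q).Adj (p m) (p (m + 1)))
    (i : Fin d) (lo hi : ℕ) (hlohi : lo < hi) (hhin : hi < n)
    (l l' : ℕ) (hl : l = 0 ∨ l < q) (hl' : l' = 0 ∨ l' < q)
    (hup : treeAdjUp ((p lo).1 i) ((p (lo + 1)).1 i))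
    (hdown : treeAdjUp ((p (hi + 1)).1 i) ((p hi).1 i))
    (hland : ((p (hi + 1)).1 i).height = ((p lo).1 i).height)
    (hint : ∀ m, lo < m → m ≤ hi → ((p lo).1 i).height < ((p m).1 i).height) :
    ∃ p' : ℕ → DLVert d q,
      (∀ m, m < n → (DLGraph d q).Adj (p' m) (p' (m + 1))) ∧
      (∀ m, m ≤ lo ∨ hi < m → p' m = p m) ∧
      (∀ m, lo < m → m ≤ hi →
        (p' m).1 i = swapAt ((p lo).1 i).height l l' hl hl' ((p m).1 i) ∧
        ∀ k, k ≠ i → (p' m).1 k = (p m).1 k) := by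
  set h₀ := ((p lo).1 i).height with hh₀
  set σ := swapAt h₀ l l' hl hl' with hσ
  refine ⟨fun m => if hm : lo < m ∧ m ≤ hi then
      updI (p m) i (σ ((p m).1 i)) (swapAt_height _ _ _ _ _ _) else p m, ?_, ?_, ?_⟩
  · intro m hmn
    by_cases hm : lo < m ∧ m ≤ hi <;> by_cases hm1 : lo < m + 1 ∧ m + 1 ≤ hi
    · -- interior step
      simp only [dif_pos hm, dif_pos hm1]
      have hgtm : h₀ < ((p m).1 i).height := hint m hm.1 hm.2
      have hgtm1 : h₀ < ((p (m + 1)).1 i).height := hint (m + 1) hm1.1 hm1.2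
      rcases adj_classify i (hpath m hmn) with
        ⟨k', hk'i, hupp, hdn, hoth⟩ | ⟨a, hai, hupp, hdn, hoth⟩ | ⟨heq, a, b, hab, hai, hbi, hupp, hdn, hoth⟩
      · refine adj_mk i k' (fun h => hk'i h.symm) ?_ ?_ ?_
        · rw [updI_same, updI_same]; exact swapAt_adjUp _ _ _ _ _ hupp hgtm
        · rw [updI_other _ _ _ _ hk'i, updI_other _ _ _ _ hk'i]; exact hdn
        · intro k hki hkk'
          rw [updI_other _ _ _ _ hki, updI_other _ _ _ _ hki]
          exact hoth k hki hkk'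
      · refine adj_mk a i hai ?_ ?_ ?_
        · rw [updI_other _ _ _ _ hai, updI_other _ _ _ _ hai]; exact hupp
        · rw [updI_same, updI_same]; exact swapAt_adjUp _ _ _ _ _ hdn hgtm1
        · intro k hka hki
          rw [updI_other _ _ _ _ hki, updI_other _ _ _ _ hki]
          exact hoth k hka hki
      · refine adj_mk a b hab ?_ ?_ ?_
        · rw [updI_other _ _ _ _ hai, updI_other _ _ _ _ hai]; exact hupp
        · rw [updI_other _ _ _ _ hbi, updI_other _ _ _ _ hbi]; exact hdn
        · intro k hka hkb
          by_cases hki : k = i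
          · subst hki; rw [updI_same, updI_same, heq]
          · rw [updI_other _ _ _ _ hki, updI_other _ _ _ _ hki]
            exact hoth k hka hkb
    · -- exit step: m = hi
      have hmhi : m = hi := by omega
      subst hmhi
      simp only [dif_pos hm, dif_neg hm1]
      rcases adj_classify i (hpath m hmn) with
        ⟨k', hk'i, hupp, -, -⟩ | ⟨a, hai, hupp, hdn, hoth⟩ | ⟨heq, -⟩
      · exact (not_treeAdjUp_both hupp hdown).elim
      · refine adj_mk a i hai ?_ ?_ ?_
        · rw [updI_other _ _ _ _ hai]; exact hupp
        · rw [updI_same]; exact swapAt_adjUp_base _ _ _ _ _ hdown hland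
        · intro k hka hki
          rw [updI_other _ _ _ _ hki]
          exact hoth k hka hki
      · have := hdown.1; rw [heq] at this; omega
    · -- entry step: m = lo
      have hmlo : m = lo := by omega
      subst hmlo
      simp only [dif_neg hm, dif_pos hm1]
      rcases adj_classify i (hpath m hmn) with
        ⟨k', hk'i, hupp, hdn, hoth⟩ | ⟨a, hai, -, hdn, -⟩ | ⟨heq, -⟩
      · refine adj_mk i k' (fun h => hk'i h.symm) ?_ ?_ ?_
        · rw [updI_same]; exact swapAt_adjUp_base _ _ _ _ _ hup rfl
        · rw [updI_other _ _ _ _ hk'i]; exact hdn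
        · intro k hki hkk'
          rw [updI_other _ _ _ _ hki]
          exact hoth k hki hkk'
      · exact (not_treeAdjUp_both hup hdn).elim
      · have := hup.1; rw [heq] at this; omega
    · -- outside the window
      simp only [dif_neg hm, dif_neg hm1]
      exact hpath m hmn
  · intro m hm
    have : ¬ (lo < m ∧ m ≤ hi) := by omega
    simp only [dif_neg this]
  · intro m hm1 hm2
    have hm : lo < m ∧ m ≤ hi := ⟨hm1, hm2⟩
    simp only [dif_pos hm]
    exact ⟨updI_same _ _ _ _, fun k hk => updI_other _ _ _ _ hk⟩
lemma flat_const (p : ℕ → DLVert d q) (i : Fin d) (t s : ℕ)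
    (hf : ∀ m, t < m → m < s → (p (m + 1)).1 i = (p m).1 i) :
    ∀ m, t + 1 ≤ m → m ≤ s → (p m).1 i = (p (t + 1)).1 i := by
  intro m hm1 hm2
  induction m with
  | zero => omega
  | succ m ih =>
    rcases Nat.lt_or_ge (t + 1) (m + 1) with h | h
    · rw [hf m (by omega) (by omega), ih (by omega) (by omega)]
    · rw [show m + 1 = t + 1 from by omega]
/-- proof. -/
theorem not_geodesic_of_two_turns' {d q : ℕ}
    (p : ℕ → DLVert d q) (n : ℕ)
    (hpath : ∀ m : ℕ, m < n → (DLGraph d q).Adj (p m) (p (m + 1)))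
    (i : Fin d) (t₁ s₁ t₂ s₂ : ℕ)
    (h1 : IsTurn i p t₁ s₁) (h2 : IsTurn i p t₂ s₂)
    (hsep : s₁ < t₂) (hs₂ : s₂ < n) :
    (DLGraph d q).dist (p 0) (p n) < n := by
  obtain ⟨ht1, hdn1, hup1, hfl1⟩ := h1
  obtain ⟨ht2, hdn2, hup2, hfl2⟩ := h2
  have hdn1 : treeAdjUp ((p (t₁ + 1)).1 i) ((p t₁).1 i) := hdn1
  have hup1 : treeAdjUp ((p s₁).1 i) ((p (s₁ + 1)).1 i) := hup1
  have hdn2 : treeAdjUp ((p (t₂ + 1)).1 i) ((p t₂).1 i) := hdn2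
  have hup2 : treeAdjUp ((p s₂).1 i) ((p (s₂ + 1)).1 i) := hup2
  have hps1 : (p s₁).1 i = (p (t₁ + 1)).1 i := flat_const p i t₁ s₁ hfl1 s₁ (by omega) le_rfl
  have hps2 : (p s₂).1 i = (p (t₂ + 1)).1 i := flat_const p i t₂ s₂ hfl2 s₂ (by omega) le_rfl
  have hdn1' : treeAdjUp ((p s₁).1 i) ((p t₁).1 i) := by rw [hps1]; exact hdn1
  have hup2' : treeAdjUp ((p (t₂ + 1)).1 i) ((p (s₂ + 1)).1 i) := by
    rw [← hps2]; exact hup2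
  have hn1 : 1 ≤ n := by omega
  have ht2n : t₂ < n := by omega
  by_cases hcase : ∃ m, s₁ < m ∧ m ≤ t₂ ∧ ((p m).1 i).height ≤ ((p (t₁ + 1)).1 i).height
  · -- Case (i): the path returns to the level of turn 1's bottom before `t₂`.
    obtain ⟨m₀, hm₀1, hm₀2, hm₀3⟩ := hcase
    have hex : ∃ m, s₁ < m ∧ ((p m).1 i).height ≤ ((p (t₁ + 1)).1 i).height :=
      ⟨m₀, hm₀1, hm₀3⟩
    set r := Nat.find hex with hr
    have hrspec : s₁ < r ∧ ((p r).1 i).height ≤ ((p (t₁ + 1)).1 i).height :=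
      Nat.find_spec hex
    have hrmin : ∀ m, m < r → ¬(s₁ < m ∧ ((p m).1 i).height ≤ ((p (t₁ + 1)).1 i).height) :=
      fun m hm => Nat.find_min hex hm
    have hrm₀ : r ≤ m₀ := Nat.find_le ⟨hm₀1, hm₀3⟩
    have hrt2 : r ≤ t₂ := by omega
    have hrs1 : s₁ + 2 ≤ r := by
      by_contra hcon
      have hreq : r = s₁ + 1 := by omega
      rw [hreq] at hrspec
      have := hup1.1
      rw [hps1] at this
      omega
    -- the step `r - 1` descends in `i` to the level of `b`
    have hgt : ∀ m, s₁ < m → m < r → ((p (t₁ + 1)).1 i).height < ((p m).1 i).height := by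
      intro m h1 h2
      have := hrmin m h2
      omega
    have hstep := hpath (r - 1) (by omega)
    rw [show r - 1 + 1 = r from by omega] at hstep
    have hgtr1 : ((p (t₁ + 1)).1 i).height < ((p (r - 1)).1 i).height :=
      hgt (r - 1) (by omega) (by omega)
    have hdownr : treeAdjUp ((p r).1 i) ((p (r - 1)).1 i) := by
      rcases adj_classify i hstep with
        ⟨k', -, hupp, -, -⟩ | ⟨a, -, -, hdnn, -⟩ | ⟨heq, -⟩
      · have := hupp.1; omega
      · exact hdnn
      · have := congrArg TreeVert.height heq; omega
    have hland : ((p r).1 i).height = ((p s₁).1 i).height := by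
      have h1 := hdownr.1
      rw [hps1]
      omega
    obtain ⟨p', hpath', hout', hwin'⟩ := surgery p n hpath i s₁ (r - 1)
      (by omega) (by omega)
      (((p t₁).1 i).labels (((p s₁).1 i).height))
      (((p (s₁ + 1)).1 i).labels (((p s₁).1 i).height))
      (((p t₁).1 i).labels_lt _) (((p (s₁ + 1)).1 i).labels_lt _)
      hup1
      (by rw [show r - 1 + 1 = r from by omega]; exact hdownr)
      (by rw [show r - 1 + 1 = r from by omega, hland])
      (fun m h1 h2 => by
        have := hgt m h1 (by omega)
        rw [hps1]; omega)
    have hswap : swapAt (((p s₁).1 i).height)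
        (((p t₁).1 i).labels (((p s₁).1 i).height))
        (((p (s₁ + 1)).1 i).labels (((p s₁).1 i).height))
        (((p t₁).1 i).labels_lt _) (((p (s₁ + 1)).1 i).labels_lt _)
        ((p (s₁ + 1)).1 i) = (p t₁).1 i :=
      swapAt_eq _ _ _ _ _ hup1 hdn1' rfl (swapFun_right _ _)
    have hw1 := (hwin' (s₁ + 1) (by omega) (by omega)).1
    have hdist := lemmaC p' n hpath' i t₁ s₁ ht1 (by omega)
      (by rw [hout' (t₁ + 1) (Or.inl (by omega)), hout' t₁ (Or.inl (by omega))]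
          exact hdn1)
      (by rw [hout' s₁ (Or.inl le_rfl), hw1, hswap]; exact hdn1')
      (fun m hm1 hm2 => by
        rw [hout' (m + 1) (Or.inl (by omega)), hout' m (Or.inl (by omega))]
        exact hfl1 m hm1 hm2)
      (by rw [hout' t₁ (Or.inl (by omega)), hw1, hswap])
    rw [hout' 0 (Or.inl (by omega)), hout' n (Or.inr (by omega))] at hdist
    omega
  · -- Case (ii): between the turns the path stays above turn 1's bottom level.
    push_neg at hcase
    have hgtb : ∀ m, s₁ < m → m ≤ t₂ →
        ((p (t₁ + 1)).1 i).height < ((p m).1 i).height := hcase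
    have hhb : ((p (t₁ + 1)).1 i).height ≤ ((p (t₂ + 1)).1 i).height := by
      have h1 := hgtb t₂ (by omega) le_rfl
      have h2 := hdn2.1
      omega
    have ht1t2 : t₁ + 1 ≤ t₂ := by omega
    have hwit : ((p (t₁ + 1)).1 i).height ≤ ((p (t₂ + 1)).1 i).height := hhb
    set Q : ℕ → Prop := fun m => ((p m).1 i).height ≤ ((p (t₂ + 1)).1 i).height with hQ
    have hQdec : DecidablePred Q := fun m => by rw [hQ]; infer_instance
    set mh := @Nat.findGreatest Q hQdec t₂ with hmh
    have hQmh : Q mh := Nat.findGreatest_spec ht1t2 hwit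
    have hmhge : t₁ + 1 ≤ mh := Nat.le_findGreatest ht1t2 hwit
    have hmhle : mh ≤ t₂ := Nat.findGreatest_le t₂
    have hmhlt : mh < t₂ := by
      rcases Nat.lt_or_ge mh t₂ with h | h
      · exact h
      · exfalso
        have : Q t₂ := by rw [show t₂ = mh from by omega]; exact hQmh
        have h2 := hdn2.1
        rw [hQ] at this
        omega
    have hgt : ∀ m, mh < m → m ≤ t₂ →
        ((p (t₂ + 1)).1 i).height < ((p m).1 i).height := by
      intro m h1 h2
      have := Nat.findGreatest_is_greatest h1 h2
      rw [hQ] at this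
      omega
    -- the step `mh` ascends in `i` from level `h`
    have hstep := hpath mh (by omega)
    have hgt1 : ((p (t₂ + 1)).1 i).height < ((p (mh + 1)).1 i).height :=
      hgt (mh + 1) (by omega) (by omega)
    have hQmh' : ((p mh).1 i).height ≤ ((p (t₂ + 1)).1 i).height := hQmh
    have hupmh : treeAdjUp ((p mh).1 i) ((p (mh + 1)).1 i) := by
      rcases adj_classify i hstep with
        ⟨k', -, hupp, -, -⟩ | ⟨a, -, -, hdnn, -⟩ | ⟨heq, -⟩
      · exact hupp
      · have := hdnn.1; omega
      · have := congrArg TreeVert.height heq; omega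
    have hE : ((p mh).1 i).height = ((p (t₂ + 1)).1 i).height := by
      have := hupmh.1; omega
    obtain ⟨p', hpath', hout', hwin'⟩ := surgery p n hpath i mh t₂
      hmhlt ht2n
      (((p t₂).1 i).labels (((p mh).1 i).height))
      (((p (s₂ + 1)).1 i).labels (((p mh).1 i).height))
      (((p t₂).1 i).labels_lt _) (((p (s₂ + 1)).1 i).labels_lt _)
      hupmh
      hdn2
      hE.symm
      (fun m hm1 hm2 => by rw [hE]; exact hgt m hm1 hm2)
    have hswap : swapAt (((p mh).1 i).height)
        (((p t₂).1 i).labels (((p mh).1 i).height))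
        (((p (s₂ + 1)).1 i).labels (((p mh).1 i).height))
        (((p t₂).1 i).labels_lt _) (((p (s₂ + 1)).1 i).labels_lt _)
        ((p t₂).1 i) = (p (s₂ + 1)).1 i :=
      swapAt_eq _ _ _ _ _ hdn2 hup2' hE.symm (swapFun_left _ _)
    have hw1 := (hwin' t₂ hmhlt le_rfl).1
    have hdist := lemmaC p' n hpath' i t₂ s₂ ht2 hs₂
      (by rw [hout' (t₂ + 1) (Or.inr (by omega)), hw1, hswap]; exact hup2')
      (by rw [hout' s₂ (Or.inr (by omega)), hout' (s₂ + 1) (Or.inr (by omega))]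
          exact hup2)
      (fun m hm1 hm2 => by
        rw [hout' (m + 1) (Or.inr (by omega)), hout' m (Or.inr (by omega))]
        exact hfl2 m hm1 hm2)
      (by rw [hout' (s₂ + 1) (Or.inr (by omega)), hw1, hswap])
    rw [hout' 0 (Or.inl (by omega)), hout' n (Or.inr (by omega))] at hdist
    omega

/-- a geodesic in `DL_d(q)` has at most one turn in each tree: a
path with two turns in some tree `T_i` is not geodesic. -/
theorem not_geodesic_of_two_turns {d q : ℕ} (hq : 2 ≤ q) (hd : 2 ≤ d)
    (p : ℕ → DLVert d q) (n : ℕ)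
    (hpath : ∀ m : ℕ, m < n → (DLGraph d q).Adj (p m) (p (m + 1)))
    (i : Fin d) (t₁ s₁ t₂ s₂ : ℕ)
    (h1 : IsTurn i p t₁ s₁) (h2 : IsTurn i p t₂ s₂)
    (hsep : s₁ < t₂) (hs₂ : s₂ < n) :
    (DLGraph d q).dist (p 0) (p n) < n := by
  exact not_geodesic_of_two_turns' p n hpath i t₁ s₁ t₂ s₂ h1 h2 hsep hs₂

end DL
end
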